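/- For all positive integers m ≥ 2: Σ_{a=0}^{m} Σ_{k=1}^{2m−a} Σ_{i₁=0}^{a} Σ_{i₂=0}^{2m−2a} C(m,a)·((−1)^{k+1}/k)·i₁!·i₂!·S(a,i₁)·S(2m−2a,i₂)·M(k;i₁,i₂) = 0, where M(k;i₁,i₂) = k!/((k−i₁)!(k−i₂)!(i₁+i₂−k)!) when max(i₁,i₂) ≤ k ≤ i₁+i₂ and 0 otherwise. -/

import Mathlib

/-- Stirling numbers of the second kind. -/

def stirling2 : ℕ → ℕ → ℕ
  | 0, 0 => 1
  | 0, _ + 1 => 0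
  | _ + 1, 0 => 0
  | n + 1, k + 1 => (k + 1) * stirling2 n (k + 1) + stirling2 n k

lemma stirling2_succ (n k : ℕ) :
    stirling2 (n+1) (k+1) = (k+1) * stirling2 n (k+1) + stirling2 n k := rfl

lemma stirling2_eq_zero (n k : ℕ) (h : n < k) : stirling2 n k = 0 := by
  induction n generalizing k with
  | zero => obtain ⟨k, rfl⟩ := Nat.exists_eq_add_of_lt h; rfl
  | succ n ih =>
    obtain ⟨j, rfl⟩ : ∃ j, k = j + 1 := ⟨k - 1, by omega⟩
    rw [stirling2_succ, ih _ (by omega), ih _ (by omega)]; ring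

lemma sum_choose_stirling (t n : ℕ) :
    ∑ i ∈ Finset.range (n+1), t.choose i * i.factorial * stirling2 n i = t ^ n := by
  induction n with
  | zero => simp [stirling2]
  | succ n ih =>
    have key : ∀ i, t * (t.choose i * i.factorial) =
        i * (t.choose i * i.factorial) + t.choose (i+1) * (i+1).factorial := by
      intro i
      rcases le_or_gt i t with h | h
      · have h1 := Nat.choose_succ_right_eq t i
        have h2 : t.choose (i+1) * (i+1).factorial
            = (t.choose (i+1) * (i+1)) * i.factorial := by
          rw [Nat.factorial_succ]; ring
        obtain ⟨d, rfl⟩ : ∃ d, t = i + d := ⟨t - i, by omega⟩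
        rw [h2, h1, Nat.add_sub_cancel_left]; ring
      · rw [Nat.choose_eq_zero_of_lt h, Nat.choose_eq_zero_of_lt (by omega)]; ring
    set g : ℕ → ℕ := fun i => i * (t.choose i * i.factorial) * stirling2 n i with hg
    set B : ℕ → ℕ := fun i => t.choose (i+1) * (i+1).factorial * stirling2 n i with hB
    have step1 : ∑ i ∈ Finset.range (n+2), t.choose i * i.factorial * stirling2 (n+1) i
        = ∑ j ∈ Finset.range (n+1), (g (j+1) + B j) := by
      rw [Finset.sum_range_succ']
      simp only [stirling2_succ, stirling2, Nat.choose_zero_right, Nat.factorial_zero]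
      rw [Finset.sum_congr rfl]
      · ring
      · intro j _; simp only [hg, hB]; ring
    have step2 : ∑ j ∈ Finset.range (n+1), g (j+1) = ∑ i ∈ Finset.range (n+1), g i := by
      have e1 : ∑ i ∈ Finset.range (n+2), g i
          = ∑ j ∈ Finset.range (n+1), g (j+1) + g 0 := Finset.sum_range_succ' g (n+1)
      have e2 : ∑ i ∈ Finset.range (n+2), g i
          = ∑ i ∈ Finset.range (n+1), g i + g (n+1) := Finset.sum_range_succ g (n+1)
      have : g 0 = 0 := by simp [hg]
      have hgn : g (n+1) = 0 := by simp [hg, stirling2_eq_zero n (n+1) (by omega)]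
      omega
    rw [step1, Finset.sum_add_distrib, step2, ← Finset.sum_add_distrib]
    have : ∀ i, g i + B i = t * (t.choose i * i.factorial * stirling2 n i) := by
      intro i; simp only [hg, hB]
      rw [show i * (t.choose i * i.factorial) * stirling2 n i
            + t.choose (i+1) * (i+1).factorial * stirling2 n i
          = (i * (t.choose i * i.factorial) + t.choose (i+1) * (i+1).factorial)
            * stirling2 n i by ring, ← key]
      ring
    rw [Finset.sum_congr rfl fun i _ => this i, ← Finset.mul_sum, ih, pow_succ]; ring

/-- `M k i₁ i₂ = k!/((k-i₁)!(k-i₂)!(i₁+i₂-k)!)` when `max i₁ i₂ ≤ k ≤ i₁ + i₂`,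
and `0` otherwise. -/
def Mtri (k i₁ i₂ : ℕ) : ℕ :=
  if i₁ ≤ k ∧ i₂ ≤ k ∧ k ≤ i₁ + i₂ then
    Nat.factorial k /
      (Nat.factorial (k - i₁) * Nat.factorial (k - i₂) * Nat.factorial (i₁ + i₂ - k))
  else 0

lemma Mtri_eq_choose (k i₁ i₂ : ℕ) :
    Mtri k i₁ i₂ = if k ≤ i₁ + i₂ then k.choose i₁ * i₁.choose (i₁ + i₂ - k) else 0 := by
  unfold Mtri
  by_cases h : i₁ ≤ k ∧ i₂ ≤ k ∧ k ≤ i₁ + i₂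
  · obtain ⟨h1, h2, h3⟩ := h
    rw [if_pos ⟨h1, h2, h3⟩, if_pos h3]
    have hd : i₁ + i₂ - k ≤ i₁ := by omega
    have e1 : k.choose i₁ * i₁.factorial * (k - i₁).factorial = k.factorial :=
      Nat.choose_mul_factorial_mul_factorial h1
    have e2 : i₁.choose (i₁ + i₂ - k) * (i₁ + i₂ - k).factorial * (i₁ - (i₁+i₂-k)).factorial
        = i₁.factorial := Nat.choose_mul_factorial_mul_factorial hd
    have e3 : i₁ - (i₁ + i₂ - k) = k - i₂ := by omega
    rw [e3] at e2
    apply Nat.div_eq_of_eq_mul_left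
    · positivity
    · rw [← e1, ← e2]; ring
  · rw [if_neg h]
    by_cases h3 : k ≤ i₁ + i₂
    · rw [if_pos h3]
      rcases not_and_or.mp h with h1 | h'
      · rw [Nat.choose_eq_zero_of_lt (by omega)]; ring
      rcases not_and_or.mp h' with h2 | h3'
      · rw [Nat.choose_eq_zero_of_lt (show i₁ < i₁ + i₂ - k by omega)]; ring
      · omega
    · rw [if_neg h3]

/-- key Vandermonde-type identity -/
lemma sum_choose_Mtri (t i₁ i₂ : ℕ) :
    ∑ k ∈ Finset.range (t+1), t.choose k * Mtri k i₁ i₂ = t.choose i₁ * t.choose i₂ := by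
  rcases le_or_gt i₁ t with h1 | h1
  case inr =>
    rw [Nat.choose_eq_zero_of_lt h1, Nat.zero_mul]
    apply Finset.sum_eq_zero
    intro k hk
    rw [Mtri_eq_choose]
    have hk' : k ≤ t := by simpa [Nat.lt_succ_iff] using hk
    have hz : k.choose i₁ = 0 := Nat.choose_eq_zero_of_lt (by omega)
    split
    · rw [hz]; ring
    · ring
  -- i₁ ≤ t
  have step : ∀ k ∈ Finset.range (t+1), t.choose k * Mtri k i₁ i₂
      = t.choose i₁ * ((t - i₁).choose (k - i₁) *
          if i₁ ≤ k ∧ k ≤ i₁ + i₂ then i₁.choose (i₁ + i₂ - k) else 0) := by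
    intro k hk
    rw [Mtri_eq_choose]
    rcases le_or_gt i₁ k with h2 | h2
    · by_cases h3 : k ≤ i₁ + i₂
      · rw [if_pos h3, if_pos ⟨h2, h3⟩, ← mul_assoc, ← mul_assoc,
          Nat.choose_mul h2]
      · rw [if_neg h3, if_neg (by tauto)]; ring
    · have hz : k.choose i₁ = 0 := Nat.choose_eq_zero_of_lt h2
      rw [if_neg (show ¬(i₁ ≤ k ∧ k ≤ i₁ + i₂) by omega)]
      split
      · rw [hz]; ring
      · ring
  rw [Finset.sum_congr rfl step, ← Finset.mul_sum]
  congr 1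
  have hi₁ : i₁ ≤ t := h1
  set N := t - i₁ with hN
  have e0 : ∑ k ∈ Finset.range (t+1),
      ((t - i₁).choose (k - i₁) * if i₁ ≤ k ∧ k ≤ i₁ + i₂ then i₁.choose (i₁ + i₂ - k) else 0)
      = ∑ k ∈ Finset.Ico i₁ (t+1),
      ((t - i₁).choose (k - i₁) * if i₁ ≤ k ∧ k ≤ i₁ + i₂ then i₁.choose (i₁ + i₂ - k) else 0) := by
    symm
    apply Finset.sum_subset
    · intro k hk; simp only [Finset.mem_Ico, Finset.mem_range] at *; omega
    · intro k _ hk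
      rw [if_neg (by simp only [Finset.mem_Ico, Finset.mem_range] at *; omega)]; ring
  rw [e0, Finset.sum_Ico_eq_sum_range]
  have e1 : ∀ j, (t - i₁).choose (i₁ + j - i₁) *
      (if i₁ ≤ i₁ + j ∧ i₁ + j ≤ i₁ + i₂ then i₁.choose (i₁ + i₂ - (i₁ + j)) else 0)
      = N.choose j * (if j ≤ i₂ then i₁.choose (i₂ - j) else 0) := by
    intro j
    have h' : i₁ + j - i₁ = j := by omega
    rw [h']
    by_cases hj : j ≤ i₂
    · rw [if_pos ⟨by omega, by omega⟩, if_pos hj]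
      congr 2
      omega
    · rw [if_neg (by omega), if_neg hj]
  rw [Finset.sum_congr rfl fun j _ => e1 j]
  have hrange : t + 1 - i₁ = N + 1 := by omega
  rw [hrange]
  have vdm : t.choose i₂ = ∑ j ∈ Finset.range (i₂+1), N.choose j * i₁.choose (i₂ - j) := by
    have h' : t = N + i₁ := by omega
    rw [h', Nat.add_choose_eq, Finset.Nat.sum_antidiagonal_eq_sum_range_succ_mk]
  have e2 : ∑ j ∈ Finset.range (i₂+1), N.choose j * i₁.choose (i₂ - j)
      = ∑ j ∈ Finset.range (i₂+1), N.choose j * (if j ≤ i₂ then i₁.choose (i₂ - j) else 0) := by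
    apply Finset.sum_congr rfl
    intro j hj
    simp only [Finset.mem_range] at hj
    rw [if_pos (by omega)]
  rw [vdm, e2]
  have b1 : ∑ j ∈ Finset.range (N + i₂ + 1), N.choose j * (if j ≤ i₂ then i₁.choose (i₂ - j) else 0)
      = ∑ j ∈ Finset.range (N+1), N.choose j * (if j ≤ i₂ then i₁.choose (i₂ - j) else 0) := by
    symm
    apply Finset.sum_subset
    · intro x hx; simp only [Finset.mem_range] at *; omega
    · intro j _ hj
      simp only [Finset.mem_range] at hj
      rw [Nat.choose_eq_zero_of_lt (by omega)]
      ring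
  have b2 : ∑ j ∈ Finset.range (N + i₂ + 1), N.choose j * (if j ≤ i₂ then i₁.choose (i₂ - j) else 0)
      = ∑ j ∈ Finset.range (i₂+1), N.choose j * (if j ≤ i₂ then i₁.choose (i₂ - j) else 0) := by
    symm
    apply Finset.sum_subset
    · intro x hx; simp only [Finset.mem_range] at *; omega
    · intro j _ hj
      simp only [Finset.mem_range] at hj
      rw [if_neg (by omega)]
      ring
  rw [← b1, b2]

lemma binom_inj (x y : ℕ → ℕ)
    (h : ∀ t, ∑ k ∈ Finset.range (t+1), t.choose k * x k
      = ∑ k ∈ Finset.range (t+1), t.choose k * y k) : ∀ t, x t = y t := by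
  intro t
  induction t using Nat.strong_induction_on with
  | _ t ih =>
    have ht := h t
    rw [Finset.sum_range_succ, Finset.sum_range_succ] at ht
    have : ∑ k ∈ Finset.range t, t.choose k * x k
        = ∑ k ∈ Finset.range t, t.choose k * y k := by
      apply Finset.sum_congr rfl
      intro k hk
      rw [ih k (Finset.mem_range.mp hk)]
    simp only [Nat.choose_self, one_mul] at ht
    omega

/-- generalized `sum_choose_stirling` over any big enough range -/
lemma sum_choose_stirling' (t n N : ℕ) (hN : n ≤ N) :
    ∑ i ∈ Finset.range (N+1), t.choose i * i.factorial * stirling2 n i = t ^ n := by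
  rw [← sum_choose_stirling t n]
  symm
  apply Finset.sum_subset
  · intro x hx; simp only [Finset.mem_range] at *; omega
  · intro i _ hi
    simp only [Finset.mem_range] at hi
    rw [stirling2_eq_zero n i (by omega)]
    ring

lemma conv_eq_surj (a b k : ℕ) :
    ∑ i₁ ∈ Finset.range (a+1), ∑ i₂ ∈ Finset.range (b+1),
      i₁.factorial * i₂.factorial * stirling2 a i₁ * stirling2 b i₂ * Mtri k i₁ i₂
    = k.factorial * stirling2 (a+b) k := by
  refine binom_inj (fun k => ∑ i₁ ∈ Finset.range (a+1), ∑ i₂ ∈ Finset.range (b+1),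
      i₁.factorial * i₂.factorial * stirling2 a i₁ * stirling2 b i₂ * Mtri k i₁ i₂)
    (fun k => k.factorial * stirling2 (a+b) k) (fun t => ?_) k
  have lhs : ∑ k ∈ Finset.range (t+1), t.choose k *
      (∑ i₁ ∈ Finset.range (a+1), ∑ i₂ ∈ Finset.range (b+1),
        i₁.factorial * i₂.factorial * stirling2 a i₁ * stirling2 b i₂ * Mtri k i₁ i₂)
      = t ^ (a+b) := by
    have swap : ∑ k ∈ Finset.range (t+1), t.choose k *
        (∑ i₁ ∈ Finset.range (a+1), ∑ i₂ ∈ Finset.range (b+1),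
          i₁.factorial * i₂.factorial * stirling2 a i₁ * stirling2 b i₂ * Mtri k i₁ i₂)
        = ∑ i₁ ∈ Finset.range (a+1), ∑ i₂ ∈ Finset.range (b+1),
          (i₁.factorial * i₂.factorial * stirling2 a i₁ * stirling2 b i₂) *
            ∑ k ∈ Finset.range (t+1), t.choose k * Mtri k i₁ i₂ := by
      simp_rw [Finset.mul_sum]
      rw [Finset.sum_comm]
      apply Finset.sum_congr rfl; intro i₁ _
      rw [Finset.sum_comm]
      apply Finset.sum_congr rfl; intro i₂ _
      apply Finset.sum_congr rfl; intro k _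
      ring
    rw [swap]
    have : ∀ i₁ ∈ Finset.range (a+1), ∀ i₂ ∈ Finset.range (b+1), (i₁.factorial * i₂.factorial * stirling2 a i₁ * stirling2 b i₂) *
            (∑ k ∈ Finset.range (t+1), t.choose k * Mtri k i₁ i₂)
        = (t.choose i₁ * i₁.factorial * stirling2 a i₁) *
          (t.choose i₂ * i₂.factorial * stirling2 b i₂) := by
      intro i₁ _ i₂ _
      rw [sum_choose_Mtri]
      ring
    rw [Finset.sum_congr rfl fun i₁ h₁ => Finset.sum_congr rfl fun i₂ h₂ => this i₁ h₁ i₂ h₂]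
    rw [← Finset.sum_mul_sum, sum_choose_stirling, sum_choose_stirling, pow_add]
  rw [lhs]
  have rhs : ∑ k ∈ Finset.range (t+1), t.choose k * (k.factorial * stirling2 (a+b) k)
      = t ^ (a+b) := by
    rw [← sum_choose_stirling' t (a+b) (t + (a+b)) (by omega)]
    have ext : ∑ k ∈ Finset.range (t+1), t.choose k * (k.factorial * stirling2 (a+b) k)
        = ∑ k ∈ Finset.range (t + (a+b) + 1), t.choose k * (k.factorial * stirling2 (a+b) k) := by
      apply Finset.sum_subset
      · intro x hx; simp only [Finset.mem_range] at *; omega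
      · intro k _ hk
        simp only [Finset.mem_range] at hk
        rw [Nat.choose_eq_zero_of_lt (by omega)]
        ring
    rw [ext]
    apply Finset.sum_congr rfl
    intro k _
    ring
  rw [rhs]

lemma alt_sum_stirling (n : ℕ) (hn : 1 ≤ n) :
    ∑ k ∈ Finset.Icc 1 (n+1),
      ((-1 : ℚ) ^ (k+1) / (k : ℚ)) * (k.factorial * stirling2 (n+1) k : ℕ) = 0 := by
  have hIcc : Finset.Icc 1 (n+1) = Finset.Ico 1 (n+2) := by
    exact (Finset.Ico_add_one_right_eq_Icc (a := 1) (b := n + 1)).symm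
  rw [hIcc, Finset.sum_Ico_eq_sum_range]
  have hr : n + 2 - 1 = n + 1 := by omega
  rw [hr]
  have term : ∀ j, ((-1 : ℚ) ^ ((1 + j) + 1) / ((1 + j : ℕ) : ℚ)) *
      ((1 + j).factorial * stirling2 (n+1) (1 + j) : ℕ)
      = (fun j => (-1 : ℚ)^j * (j.factorial : ℕ) * (stirling2 n j : ℕ)) j
        - (fun j => (-1 : ℚ)^j * (j.factorial : ℕ) * (stirling2 n j : ℕ)) (j+1) := by
    intro j
    have h1 : 1 + j = j + 1 := by omega
    rw [h1]
    rw [stirling2_succ]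
    simp only
    push_cast [Nat.factorial_succ]
    have hj : ((j : ℚ) + 1) ≠ 0 := by positivity
    field_simp
    ring
  rw [Finset.sum_congr rfl fun j _ => term j, Finset.sum_range_sub']
  rw [stirling2_eq_zero n (n+1) (by omega)]
  obtain ⟨n', rfl⟩ : ∃ n', n = n' + 1 := ⟨n - 1, by omega⟩
  show ((-1:ℚ))^0 * ((Nat.factorial 0 : ℕ) : ℚ) * ((stirling2 (n'+1) 0 : ℕ) : ℚ) - _ = 0
  norm_num [stirling2]

theorem stmt19 (m : ℕ) (hm : 2 ≤ m) :
    ∑ a ∈ Finset.range (m + 1), ∑ k ∈ Finset.Icc 1 (2 * m - a),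
      ∑ i₁ ∈ Finset.range (a + 1), ∑ i₂ ∈ Finset.range (2 * m - 2 * a + 1),
        (Nat.choose m a : ℚ) * ((-1 : ℚ) ^ (k + 1) / (k : ℚ)) *
          (Nat.factorial i₁ : ℚ) * (Nat.factorial i₂ : ℚ) *
          (stirling2 a i₁ : ℚ) * (stirling2 (2 * m - 2 * a) i₂ : ℚ) *
          (Mtri k i₁ i₂ : ℚ) = 0 := by
  apply Finset.sum_eq_zero
  intro a ha
  simp only [Finset.mem_range] at ha
  have ha' : a ≤ m := by omega
  set b := 2 * m - 2 * a with hb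
  obtain ⟨n', hn⟩ : ∃ n', 2 * m - a = n' + 1 := ⟨2 * m - a - 1, by omega⟩
  have hn1 : 1 ≤ n' := by omega
  have hab : a + b = n' + 1 := by omega
  rw [hn]
  have inner : ∀ k ∈ Finset.Icc 1 (n' + 1),
      (∑ i₁ ∈ Finset.range (a + 1), ∑ i₂ ∈ Finset.range (b + 1),
        (Nat.choose m a : ℚ) * ((-1 : ℚ) ^ (k + 1) / (k : ℚ)) *
          (Nat.factorial i₁ : ℚ) * (Nat.factorial i₂ : ℚ) *
          (stirling2 a i₁ : ℚ) * (stirling2 b i₂ : ℚ) * (Mtri k i₁ i₂ : ℚ))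
      = (Nat.choose m a : ℚ) *
          (((-1 : ℚ) ^ (k + 1) / (k : ℚ)) *
            ((k.factorial * stirling2 (n' + 1) k : ℕ) : ℚ)) := by
    intro k _
    have hc : ((k.factorial * stirling2 (n' + 1) k : ℕ) : ℚ)
        = ∑ i₁ ∈ Finset.range (a + 1), ∑ i₂ ∈ Finset.range (b + 1),
            ((i₁.factorial * i₂.factorial * stirling2 a i₁ * stirling2 b i₂
              * Mtri k i₁ i₂ : ℕ) : ℚ) := by
      rw [← hab, ← conv_eq_surj a b k]
      push_cast
      rfl
    calc ∑ i₁ ∈ Finset.range (a + 1), ∑ i₂ ∈ Finset.range (b + 1),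
        (Nat.choose m a : ℚ) * ((-1 : ℚ) ^ (k + 1) / (k : ℚ)) *
          (Nat.factorial i₁ : ℚ) * (Nat.factorial i₂ : ℚ) *
          (stirling2 a i₁ : ℚ) * (stirling2 b i₂ : ℚ) * (Mtri k i₁ i₂ : ℚ)
        = ((Nat.choose m a : ℚ) * ((-1 : ℚ) ^ (k + 1) / (k : ℚ))) *
          ∑ i₁ ∈ Finset.range (a + 1), ∑ i₂ ∈ Finset.range (b + 1),
            ((i₁.factorial * i₂.factorial * stirling2 a i₁ * stirling2 b i₂
              * Mtri k i₁ i₂ : ℕ) : ℚ) := by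
          rw [Finset.mul_sum]
          apply Finset.sum_congr rfl
          intro i₁ _
          rw [Finset.mul_sum]
          apply Finset.sum_congr rfl
          intro i₂ _
          push_cast
          ring
      _ = (Nat.choose m a : ℚ) *
          (((-1 : ℚ) ^ (k + 1) / (k : ℚ)) *
            ((k.factorial * stirling2 (n' + 1) k : ℕ) : ℚ)) := by
          rw [hc]; ring
  rw [Finset.sum_congr rfl inner, ← Finset.mul_sum]
  rw [alt_sum_stirling n' hn1, mul_zero]
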